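/- Let Λ be a non-coherence-generating qubit channel (a channel on 2×2 density matrices mapping every diagonal density matrix to a diagonal matrix). Then for every 2×2 density matrix ρ₂, the l₁-norm of coherence satisfies C_{l1}(Λ(ρ₂)) ≤ C_{l1}(ρ₂). -/

import Mathlib

open Matrix BigOperators Kronecker ComplexOrder

/-- Base-2 Shannon entropy of a probability vector, with the convention `0 · log 0 = 0`
(automatic since `Real.logb 2 0 = 0`). -/
noncomputable def shannon2 {n : Type*} [Fintype n] (p : n → ℝ) : ℝ :=
  -∑ i, p i * Real.logb 2 (p i)

/-- A density matrix: positive semidefinite with unit trace. -/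
def IsDensityMatrix {n : Type*} [Fintype n] (ρ : Matrix n n ℂ) : Prop :=
  ρ.PosSemidef ∧ ρ.trace = 1

/-- Von Neumann entropy (base 2): Shannon entropy of the eigenvalues. -/
noncomputable def vN {n : Type*} [Fintype n] [DecidableEq n] (ρ : Matrix n n ℂ) : ℝ :=
  if h : ρ.IsHermitian then shannon2 h.eigenvalues else 0

/-- Relative entropy of coherence `C_r(ρ) = S(Δ(ρ)) - S(ρ)`, where `Δ` is the
diagonal part. -/
noncomputable def Cr {n : Type*} [Fintype n] [DecidableEq n] (ρ : Matrix n n ℂ) : ℝ :=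
  vN (Matrix.diagonal ρ.diag) - vN ρ

/-- Application of a channel given by its Kraus operators: `ρ ↦ ∑ i, K i * ρ * (K i)ᴴ`. -/
noncomputable def krausApply {ι m p : Type*} [Fintype ι] [Fintype m] [Fintype p]
    (K : ι → Matrix p m ℂ) (ρ : Matrix m m ℂ) : Matrix p p ℂ :=
  ∑ i, K i * ρ * (K i)ᴴ

/-- Coherence of formation: infimum over finite pure-state decompositions
`ρ = ∑ i, p i • |ψ i⟩⟨ψ i|` of `∑ i, p i * S(Δ(|ψ i⟩⟨ψ i|))`. -/
noncomputable def Cf {n : Type*} [Fintype n] (ρ : Matrix n n ℂ) : ℝ :=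
  sInf { x : ℝ | ∃ (m : ℕ) (p : Fin m → ℝ) (ψ : Fin m → n → ℂ),
    (∀ i, 0 < p i) ∧ (∑ i, p i = 1) ∧ (∀ i, ∑ j, ‖ψ i j‖ ^ 2 = 1) ∧
    ρ = ∑ i, (p i : ℂ) • Matrix.vecMulVec (ψ i) (star (ψ i)) ∧
    x = ∑ i, p i * shannon2 (fun j => ‖ψ i j‖ ^ 2) }

/-- l₁-norm of coherence: sum of the absolute values of the off-diagonal entries. -/
noncomputable def Cl1 {n : Type*} [Fintype n] [DecidableEq n] (ρ : Matrix n n ℂ) : ℝ :=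
  ∑ i, ∑ j, if i ≠ j then ‖ρ i j‖ else 0

theorem star_mul_re' (z : ℂ) : (star z * z).re = ‖z‖^2 := by
  simp [← Complex.normSq_eq_conj_mul_self, Complex.normSq_eq_norm_sq,
    ← Complex.ofReal_pow]

theorem krausApply_entry {N : ℕ} (K : Fin N → Matrix (Fin 2) (Fin 2) ℂ)
    (ρ : Matrix (Fin 2) (Fin 2) ℂ) (a b : Fin 2) :
    (krausApply K ρ) a b
      = ρ 0 0 * ∑ i, K i a 0 * star (K i b 0)
      + ρ 0 1 * ∑ i, K i a 0 * star (K i b 1)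
      + ρ 1 0 * ∑ i, K i a 1 * star (K i b 0)
      + ρ 1 1 * ∑ i, K i a 1 * star (K i b 1) := by
  simp only [krausApply, Matrix.sum_apply, Matrix.mul_apply, Matrix.conjTranspose_apply,
    Fin.sum_univ_two, Finset.mul_sum, ← Finset.sum_add_distrib]
  congr 1
  ext i
  ring

theorem Cl1_monotone_under_qubit_NC (N : ℕ)
    (K : Fin N → Matrix (Fin 2) (Fin 2) ℂ)
    (hKraus : ∑ i, (K i)ᴴ * K i = 1)
    (hNC : ∀ σ : Matrix (Fin 2) (Fin 2) ℂ,
      IsDensityMatrix σ → σ.IsDiag → (krausApply K σ).IsDiag)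
    (ρ : Matrix (Fin 2) (Fin 2) ℂ) (hρ : IsDensityMatrix ρ) :
    Cl1 (krausApply K ρ) ≤ Cl1 ρ := by
  -- (1) trace-preservation entries, real form
  have hcol : ∀ b : Fin 2, ∑ i, (‖K i 0 b‖^2 + ‖K i 1 b‖^2) = 1 := by
    intro b
    have h := congrFun (congrFun hKraus b) b
    simp only [Matrix.sum_apply, Matrix.mul_apply, Matrix.conjTranspose_apply, Fin.sum_univ_two,
      Matrix.one_apply_eq] at h
    have h2 := congrArg Complex.re h
    simp only [Complex.re_sum, Complex.add_re, Complex.one_re, star_mul_re'] at h2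
    exact h2
  -- (2) NC hypothesis: four vanishing cross terms
  have hz : ∀ c : Fin 2, ∀ a b : Fin 2, a ≠ b → ∑ i, K i a c * star (K i b c) = 0 := by
    intro c a b hab
    have hdm : IsDensityMatrix (Matrix.diagonal (fun j => if j = c then (1:ℂ) else 0)) := by
      constructor
      · apply Matrix.PosSemidef.diagonal
        intro i
        by_cases h : i = c <;> simp [h]
      · simp [Matrix.trace_diagonal]
    have hd : (krausApply K (Matrix.diagonal fun j => if j = c then (1:ℂ) else 0)) a b = 0 :=
      hNC _ hdm (Matrix.isDiag_diagonal _) hab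
    rw [krausApply_entry] at hd
    fin_cases c <;>
      simpa [Matrix.diagonal_apply] using hd
  have hz01 := hz 0 0 1 (by decide)
  have hz10 := hz 0 1 0 (by decide)
  have hw01 := hz 1 0 1 (by decide)
  have hw10 := hz 1 1 0 (by decide)
  -- (3) the two relevant amplitudes
  set s := ∑ i, K i 0 0 * star (K i 1 1) with hs_def
  set t := ∑ i, K i 0 1 * star (K i 1 0) with ht_def
  have hstar_s : ∑ i, K i 1 1 * star (K i 0 0) = star s := by
    rw [hs_def, star_sum]
    congr 1; ext i; simp [mul_comm]
  have hstar_t : ∑ i, K i 1 0 * star (K i 0 1) = star t := by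
    rw [ht_def, star_sum]
    congr 1; ext i; simp [mul_comm]
  -- (4) off-diagonal entries of the output
  have hE01 : (krausApply K ρ) 0 1 = ρ 0 1 * s + ρ 1 0 * t := by
    rw [krausApply_entry, hz01, hw01, ← hs_def, ← ht_def]; ring
  have hE10 : (krausApply K ρ) 1 0 = ρ 0 1 * star t + ρ 1 0 * star s := by
    rw [krausApply_entry, hz10, hw10, hstar_s, hstar_t]; ring
  -- (5) bound ‖s‖ + ‖t‖ ≤ 1
  have hns : ‖s‖ ≤ ∑ i, ‖K i 0 0‖ * ‖K i 1 1‖ := by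
    refine (norm_sum_le _ _).trans (le_of_eq ?_)
    congr 1; ext i; simp
  have hnt : ‖t‖ ≤ ∑ i, ‖K i 0 1‖ * ‖K i 1 0‖ := by
    refine (norm_sum_le _ _).trans (le_of_eq ?_)
    congr 1; ext i; simp
  have hsum : (∑ i, ‖K i 0 0‖ * ‖K i 1 1‖) + (∑ i, ‖K i 0 1‖ * ‖K i 1 0‖) ≤ 1 := by
    have key : ∀ i : Fin N, ‖K i 0 0‖ * ‖K i 1 1‖ + ‖K i 0 1‖ * ‖K i 1 0‖ ≤
        ((‖K i 0 0‖^2 + ‖K i 1 0‖^2) + (‖K i 0 1‖^2 + ‖K i 1 1‖^2)) / 2 := by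
      intro i
      nlinarith [sq_nonneg (‖K i 0 0‖ - ‖K i 1 1‖), sq_nonneg (‖K i 0 1‖ - ‖K i 1 0‖)]
    calc (∑ i, ‖K i 0 0‖ * ‖K i 1 1‖) + (∑ i, ‖K i 0 1‖ * ‖K i 1 0‖)
        = ∑ i, (‖K i 0 0‖ * ‖K i 1 1‖ + ‖K i 0 1‖ * ‖K i 1 0‖) := by
          rw [Finset.sum_add_distrib]
      _ ≤ ∑ i, ((‖K i 0 0‖^2 + ‖K i 1 0‖^2) + (‖K i 0 1‖^2 + ‖K i 1 1‖^2)) / 2 :=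
          Finset.sum_le_sum (fun i _ => key i)
      _ = 1 := by
          rw [← Finset.sum_div, Finset.sum_add_distrib, hcol 0, hcol 1]
          norm_num
  have hst : ‖s‖ + ‖t‖ ≤ 1 := by linarith
  -- (6) assemble
  have hCl1ρ : Cl1 ρ = ‖ρ 0 1‖ + ‖ρ 1 0‖ := by
    simp [Cl1, Fin.sum_univ_two]
  have hCl1Λ : Cl1 (krausApply K ρ) = ‖(krausApply K ρ) 0 1‖ + ‖(krausApply K ρ) 1 0‖ := by
    simp [Cl1, Fin.sum_univ_two]
  rw [hCl1ρ, hCl1Λ, hE01, hE10]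
  have b1 : ‖ρ 0 1 * s + ρ 1 0 * t‖ ≤ ‖ρ 0 1‖ * ‖s‖ + ‖ρ 1 0‖ * ‖t‖ := by
    refine (norm_add_le _ _).trans ?_
    simp [norm_mul]
  have b2 : ‖ρ 0 1 * star t + ρ 1 0 * star s‖ ≤ ‖ρ 0 1‖ * ‖t‖ + ‖ρ 1 0‖ * ‖s‖ := by
    refine (norm_add_le _ _).trans ?_
    simp [norm_mul]
  nlinarith [norm_nonneg (ρ 0 1), norm_nonneg (ρ 1 0), norm_nonneg s, norm_nonneg t]
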